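/- Let (X,d) be a metric space with marked point a. If every two normalizing sequences are equivalent at a, then a is an isolated point of X. -/

import Mathlib

open Filter Topology

/-- A normalizing sequence: positive reals tending to 0. -/
def Normalizing (r : ℕ → ℝ) : Prop :=
  (∀ n, 0 < r n) ∧ Tendsto r atTop (nhds 0)

/-- Two sequences in `X` are mutually stable w.r.t. `r`:
the limit of `dist (x n) (y n) / r n` exists and is finite. -/
def MutuallyStable {X : Type*} [MetricSpace X] (r : ℕ → ℝ) (x y : ℕ → X) : Prop :=
  ∃ L : ℝ, Tendsto (fun n => dist (x n) (y n) / r n) atTop (nhds L)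

/-- The normalized limit distance `d̃`. -/
noncomputable def dtilde {X : Type*} [MetricSpace X] (r : ℕ → ℝ) (x y : ℕ → X) : ℝ :=
  limUnder atTop (fun n => dist (x n) (y n) / r n)

/-- A family is self-stable if every two members are mutually stable. -/
def SelfStable {X : Type*} [MetricSpace X] (r : ℕ → ℝ) (F : Set (ℕ → X)) : Prop :=
  ∀ x ∈ F, ∀ y ∈ F, MutuallyStable r x y

/-- A family is maximal self-stable if it is self-stable and maximal with that property. -/
def MaximalSelfStable {X : Type*} [MetricSpace X] (r : ℕ → ℝ) (F : Set (ℕ → X)) : Prop :=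
  SelfStable r F ∧ ∀ G, SelfStable r G → F ⊆ G → G = F

/-- Two normalizing sequences are equivalent at `a`. -/
def EquivAt {X : Type*} [MetricSpace X] (a : X) (r t : ℕ → ℝ) : Prop :=
  ∀ F : Set (ℕ → X), (fun _ => a) ∈ F → (SelfStable r F ↔ SelfStable t F)

/-- A normalizing sequence is confluented at `a`: every sequence mutually stable with
the constant sequence `ã` has normalized distance 0 to it. -/
def Confluented {X : Type*} [MetricSpace X] (a : X) (r : ℕ → ℝ) : Prop :=
  ∀ x : ℕ → X, MutuallyStable r x (fun _ => a) →
    Tendsto (fun n => dist (x n) a / r n) atTop (nhds 0)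

/-- If every two normalizing sequences are equivalent at `a`, then `a` is isolated. -/
theorem stmt_9 {X : Type*} [MetricSpace X] (a : X)
    (h : ∀ r t : ℕ → ℝ, Normalizing r → Normalizing t → EquivAt a r t) :
    ∃ ε > (0 : ℝ), ∀ x : X, dist x a < ε → x = a := by
  by_contra hc
  push_neg at hc
  -- choose a sequence x n ≠ a with dist (x n) a < 1/(n+1)
  have hx : ∀ n : ℕ, ∃ x : X, dist x a < 1/(n+1) ∧ x ≠ a := by
    intro n
    obtain ⟨x, hx1, hx2⟩ := hc (1/(n+1)) (by positivity)
    exact ⟨x, hx1, hx2⟩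
  choose x hx1 hx2 using hx
  set d : ℕ → ℝ := fun n => dist (x n) a with hd
  have hdpos : ∀ n, 0 < d n := fun n => dist_pos.mpr (hx2 n)
  have hdlim : Tendsto d atTop (nhds 0) := by
    apply squeeze_zero (fun n => dist_nonneg) (fun n => (hx1 n).le)
    simpa using tendsto_one_div_add_atTop_nhds_zero_nat (𝕜 := ℝ)
  set r : ℕ → ℝ := d with hr
  set t : ℕ → ℝ := fun n => (if Even n then 1 else 2) * d n with ht
  have hcoef : ∀ n : ℕ, (0:ℝ) < (if Even n then 1 else 2) := by
    intro n; split <;> norm_num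
  have hNr : Normalizing r := ⟨hdpos, hdlim⟩
  have hNt : Normalizing t := by
    refine ⟨fun n => mul_pos (hcoef n) (hdpos n), ?_⟩
    apply squeeze_zero (fun n => (mul_pos (hcoef n) (hdpos n)).le)
      (g := fun n => 2 * d n)
    · intro n
      have := (hdpos n).le
      show (if Even n then 1 else 2) * d n ≤ 2 * d n
      split <;> nlinarith
    · simpa using hdlim.const_mul 2
  set F : Set (ℕ → X) := {fun _ => a, x} with hF
  have haF : (fun _ => a) ∈ F := Set.mem_insert _ _
  have hone : Tendsto (fun n => dist (x n) a / r n) atTop (nhds 1) := by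
    have : ∀ n, dist (x n) a / r n = 1 := fun n => div_self (hdpos n).ne'
    simpa [this] using tendsto_const_nhds (x := (1:ℝ)) (f := atTop)
  have hSSr : SelfStable r F := by
    intro p hp q hq
    rcases hp with hp | hp <;> rcases hq with hq | hq <;>
      (try simp only [Set.mem_singleton_iff] at *)
    · rw [hp, hq]; exact ⟨0, by simpa using tendsto_const_nhds (x := (0:ℝ)) (f := atTop)⟩
    · rw [hp, hq]; exact ⟨1, by simpa [dist_comm] using hone⟩
    · rw [hp, hq]; exact ⟨1, hone⟩
    · rw [hp, hq]; exact ⟨0, by simpa using tendsto_const_nhds (x := (0:ℝ)) (f := atTop)⟩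
  have hSSt : SelfStable t F := (h r t hNr hNt F haF).mp hSSr
  obtain ⟨L, hL⟩ := hSSt x (Set.mem_insert_of_mem _ rfl) (fun _ => a) haF
  -- compute the values of the sequence
  have hval : ∀ n : ℕ, dist (x n) a / t n = if Even n then 1 else 1/2 := by
    intro n
    show dist (x n) a / ((if Even n then 1 else 2) * d n) = _
    split
    · rw [one_mul]; exact div_self (hdpos n).ne'
    · rw [div_eq_iff (mul_pos two_pos (hdpos n)).ne']
      show d n = 1/2 * (2 * d n)
      ring
  have heven : Tendsto (fun k : ℕ => dist (x (2*k)) a / t (2*k)) atTop (nhds L) :=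
    hL.comp (tendsto_atTop_atTop_of_monotone (fun i j hij => by omega)
      (fun b => ⟨b, by omega⟩))
  have hodd : Tendsto (fun k : ℕ => dist (x (2*k+1)) a / t (2*k+1)) atTop (nhds L) :=
    hL.comp (tendsto_atTop_atTop_of_monotone (fun i j hij => by omega)
      (fun b => ⟨b, by omega⟩))
  have h1 : L = 1 := by
    have : ∀ k : ℕ, dist (x (2*k)) a / t (2*k) = 1 := by
      intro k; rw [hval]; simp [even_two_mul]
    simp only [this] at heven
    exact (tendsto_nhds_unique heven tendsto_const_nhds)
  have h2 : L = 1/2 := by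
    have : ∀ k : ℕ, dist (x (2*k+1)) a / t (2*k+1) = 1/2 := by
      intro k; rw [hval]; simp [Nat.even_add_one, even_two_mul, parity_simps]
    simp only [this] at hodd
    exact (tendsto_nhds_unique hodd tendsto_const_nhds)
  rw [h1] at h2
  norm_num at h2
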